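/- Let E ∈ M(J, {n_k}, {c_k}) be a Moran set with lim_{k→∞} (log c_k)/(log(c_1⋯c_k)) = 0. Then for every δ ∈ (0,1), h_E(δ) ≤ limsup_{q→∞} max_{1 ≤ p ≤ l_{q,δ}} (log(n_p⋯n_q))/(−log(c_p⋯c_q)). More precisely, for every s strictly greater than this limsup there exist b, c > 0 such that N_{r,R}(E) ≤ c(R/r)^s for all 0 < r < r^{1-δ} ≤ R < b. -/

import Mathlib

open Filter Topology Metric Set

/-- `coverNum X r R` : the smallest number of closed balls of radius `r` needed to cover
`X ∩ B` over all closed balls `B` of radius `R`. -/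
noncomputable def coverNum (X : Type*) [MetricSpace X] (r R : ℝ) : ℕ :=
  sSup {n : ℕ | ∃ x : X, n = sInf {m : ℕ | ∃ s : Finset X,
    s.card = m ∧ Metric.closedBall x R ⊆ ⋃ y ∈ s, Metric.closedBall y r}}

/-- `hFun X δ = inf {α ≥ 0 : ∃ b, c > 0, N_{r,R}(X) ≤ c (R/r)^α for all 0 < r < r^(1-δ) ≤ R < b}`. -/
noncomputable def hFun (X : Type*) [MetricSpace X] (δ : ℝ) : ℝ :=
  sInf {α : ℝ | 0 ≤ α ∧ ∃ b c : ℝ, 0 < b ∧ 0 < c ∧ ∀ r R : ℝ,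
    0 < r → r < r ^ (1 - δ) → r ^ (1 - δ) ≤ R → R < b →
      (coverNum X r R : ℝ) ≤ c * (R / r) ^ α}

/-- The quasi-Assouad dimension `dim_qA X = lim_{δ → 0⁺} h_X(δ)`; since `h_X` is
non-increasing in `δ`, this limit equals the supremum over `δ ∈ (0,1)`. -/
noncomputable def dimqA (X : Type*) [MetricSpace X] : ℝ :=
  sSup (hFun X '' Set.Ioo 0 1)

/-- A word `i₁ ⋯ i_k` (as a list, head = `i₁`) is admissible for the branching numbers `n`
if `1 ≤ i_t ≤ n t` for every `t`. -/
def MoranAdmissible (n : ℕ → ℕ) (w : List ℕ) : Prop :=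
  ∀ t : ℕ, t < w.length → 1 ≤ w.getD t 0 ∧ w.getD t 0 ≤ n (t + 1)

/-- `F ∈ M(J, {n_k}, {c_k})` : `F` is a Moran set with initial closed interval `J`,
branching numbers `n_k` and contraction ratios `c_k` (indices start at `1`). -/
def IsMoranSet (J : Set ℝ) (n : ℕ → ℕ) (c : ℕ → ℝ) (F : Set ℝ) : Prop :=
  ∃ A B : ℝ, A < B ∧ J = Set.Icc A B ∧
  ∃ a b : List ℕ → ℝ,
    a [] = A ∧ b [] = B ∧
    (∀ w : List ℕ, MoranAdmissible n w → ∀ j : ℕ, 1 ≤ j → j ≤ n (w.length + 1) →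
      a w ≤ a (w ++ [j]) ∧ a (w ++ [j]) < b (w ++ [j]) ∧ b (w ++ [j]) ≤ b w ∧
      b (w ++ [j]) - a (w ++ [j]) = c (w.length + 1) * (b w - a w)) ∧
    (∀ w : List ℕ, MoranAdmissible n w → ∀ j j' : ℕ, 1 ≤ j → j ≤ n (w.length + 1) →
      1 ≤ j' → j' ≤ n (w.length + 1) → j ≠ j' →
      interior (Set.Icc (a (w ++ [j])) (b (w ++ [j]))) ∩
        interior (Set.Icc (a (w ++ [j'])) (b (w ++ [j']))) = ∅) ∧
    F = ⋂ k : ℕ, ⋃ w ∈ {w : List ℕ | MoranAdmissible n w ∧ w.length = k},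
      Set.Icc (a w) (b w)

/-- `s_{p,q} = log (n_p ⋯ n_q) / (- log (c_p ⋯ c_q))`. -/
noncomputable def spq (n : ℕ → ℕ) (c : ℕ → ℝ) (p q : ℕ) : ℝ :=
  Real.log (∏ i ∈ Finset.Icc p q, (n i : ℝ)) / (-Real.log (∏ i ∈ Finset.Icc p q, c i))

/-- `l_{q,δ} = max {1 ≤ p ≤ q : log (c_p ⋯ c_q) / log (c_1 ⋯ c_q) > δ}`. -/
noncomputable def lIdx (c : ℕ → ℝ) (δ : ℝ) (q : ℕ) : ℕ :=
  sSup {p : ℕ | 1 ≤ p ∧ p ≤ q ∧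
    δ < Real.log (∏ i ∈ Finset.Icc p q, c i) / Real.log (∏ i ∈ Finset.Icc 1 q, c i)}

namespace MoranAux

lemma adm_append {n : ℕ → ℕ} {w : List ℕ} {j : ℕ} :
    MoranAdmissible n (w ++ [j]) ↔ MoranAdmissible n w ∧ 1 ≤ j ∧ j ≤ n (w.length + 1) := by
  constructor
  · intro h
    refine ⟨fun t ht => ?_, ?_⟩
    · rw [← List.getD_append w [j] 0 t ht]
      exact h t (by simp; omega)
    · have := h w.length (by simp)
      simpa using this
  · rintro ⟨h1, h2, h3⟩ t ht
    simp only [List.length_append, List.length_cons, List.length_nil] at ht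
    rcases lt_or_ge t w.length with h | h
    · rw [List.getD_append w [j] 0 t h]; exact h1 t h
    · have : t = w.length := by omega
      subst this
      simpa using ⟨h2, h3⟩

lemma adm_take {n : ℕ → ℕ} {w : List ℕ} (h : MoranAdmissible n w) (p : ℕ) :
    MoranAdmissible n (w.take p) := by
  intro t ht
  simp only [List.length_take] at ht
  have ht' : t < w.length := lt_of_lt_of_le ht (by omega)
  have : (w.take p).getD t 0 = w.getD t 0 := by
    simp only [List.getD_eq_getElem?_getD, List.getElem?_take]
    rw [if_pos (by omega)]
  rw [this]
  exact h t ht'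

/-- Finset of admissible words of length k. -/
def words (n : ℕ → ℕ) : ℕ → Finset (List ℕ)
  | 0 => {[]}
  | k+1 => (words n k).biUnion fun w => (Finset.Icc 1 (n (k+1))).image fun j => w ++ [j]

lemma mem_words {n : ℕ → ℕ} : ∀ {k : ℕ} {w : List ℕ},
    w ∈ words n k ↔ MoranAdmissible n w ∧ w.length = k := by
  intro k
  induction k with
  | zero =>
    intro w
    simp [words, List.length_eq_zero_iff]
    rintro rfl
    intro t ht; simp at ht
  | succ k ih =>
    intro w
    simp only [words, Finset.mem_biUnion, Finset.mem_image, Finset.mem_Icc]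
    constructor
    · rintro ⟨u, hu, j, ⟨hj1, hj2⟩, rfl⟩
      obtain ⟨hadm, hlen⟩ := ih.mp hu
      subst hlen
      exact ⟨adm_append.mpr ⟨hadm, hj1, hj2⟩, by simp⟩
    · rintro ⟨hadm, hlen⟩
      rcases w.eq_nil_or_concat with rfl | ⟨u, j, rfl⟩
      · simp at hlen
      · simp only [List.concat_eq_append] at hadm hlen ⊢
        simp only [List.length_append, List.length_cons, List.length_nil] at hlen
        have hlu : u.length = k := by omega
        obtain ⟨h1, h2, h3⟩ := adm_append.mp hadm
        exact ⟨u, ih.mpr ⟨h1, hlu⟩, j, ⟨h2, by rwa [hlu] at h3⟩, rfl⟩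

lemma card_fiber_le {n : ℕ → ℕ} (k : ℕ) : ∀ (m : ℕ) (u : List ℕ),
    ((words n (k + m)).filter (fun w => w.take k = u)).card ≤
      ∏ i ∈ Finset.Icc (k+1) (k+m), n i := by
  classical
  intro m
  induction m with
  | zero =>
    intro u
    rw [Finset.Icc_eq_empty (by omega), Finset.prod_empty]
    refine Finset.card_le_one.mpr (fun w hw w' hw' => ?_) |>.trans ?_ |>.trans_eq rfl
    · simp only [Finset.mem_filter] at hw hw'
      have l1 : w.take k = w := List.take_of_length_le (by rw [(mem_words.mp hw.1).2]; omega)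
      have l2 : w'.take k = w' := List.take_of_length_le (by rw [(mem_words.mp hw'.1).2]; omega)
      rw [← l1, hw.2, ← l2.symm.trans hw'.2]
    · exact le_refl 1
  | succ m ih =>
    intro u
    have hsplit : (words n (k + (m+1))).filter (fun w => w.take k = u) =
        (words n (k+m)).biUnion (fun w =>
          ((Finset.Icc 1 (n (k+m+1))).image (fun j => w ++ [j])).filter
            (fun w => w.take k = u)) := by
      show (words n ((k+m)+1)).filter _ = _
      rw [words, Finset.filter_biUnion]
    rw [hsplit]
    calc ((words n (k+m)).biUnion _).card
        ≤ ∑ w ∈ words n (k+m), (((Finset.Icc 1 (n (k+m+1))).image (fun j => w ++ [j])).filter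
            (fun w => w.take k = u)).card := Finset.card_biUnion_le
      _ ≤ ∑ w ∈ words n (k+m), (if w.take k = u then n (k+m+1) else 0) := by
          refine Finset.sum_le_sum (fun w hw => ?_)
          by_cases h : w.take k = u
          · rw [if_pos h]
            calc _ ≤ ((Finset.Icc 1 (n (k+m+1))).image (fun j => w ++ [j])).card :=
                  Finset.card_filter_le _ _
              _ ≤ (Finset.Icc 1 (n (k+m+1))).card := Finset.card_image_le
              _ ≤ n (k+m+1) := by simp
          · rw [if_neg h]
            have : (((Finset.Icc 1 (n (k+m+1))).image (fun j => w ++ [j])).filter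
                (fun w => w.take k = u)) = ∅ := by
              refine Finset.filter_eq_empty_iff.mpr (fun v hv => ?_)
              simp only [Finset.mem_image] at hv
              obtain ⟨j, _, rfl⟩ := hv
              have hlw : w.length = k + m := (mem_words.mp hw).2
              rw [List.take_append_of_le_length (by omega)]
              exact h
            simp [this]
      _ = (((words n (k+m)).filter (fun w => w.take k = u)).card) * n (k+m+1) := by
          rw [← Finset.sum_filter, Finset.sum_const, smul_eq_mul]
      _ ≤ (∏ i ∈ Finset.Icc (k+1) (k+m), n i) * n (k+m+1) :=
          Nat.mul_le_mul_right _ (ih u)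
      _ = ∏ i ∈ Finset.Icc (k+1) (k+m+1), n i := by
          rw [Finset.prod_Icc_succ_top (by omega)]


section Moran

variable {n : ℕ → ℕ} {c : ℕ → ℝ} {a b : List ℕ → ℝ} {A B : ℝ}
variable (hn : ∀ k : ℕ, 1 ≤ k → 2 ≤ n k)
variable (hAB : A < B) (ha0 : a [] = A) (hb0 : b [] = B)
variable (hstep : ∀ w : List ℕ, MoranAdmissible n w → ∀ j : ℕ, 1 ≤ j → j ≤ n (w.length + 1) →
      a w ≤ a (w ++ [j]) ∧ a (w ++ [j]) < b (w ++ [j]) ∧ b (w ++ [j]) ≤ b w ∧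
      b (w ++ [j]) - a (w ++ [j]) = c (w.length + 1) * (b w - a w))
variable (hdisj : ∀ w : List ℕ, MoranAdmissible n w → ∀ j j' : ℕ, 1 ≤ j → j ≤ n (w.length + 1) →
      1 ≤ j' → j' ≤ n (w.length + 1) → j ≠ j' →
      interior (Set.Icc (a (w ++ [j])) (b (w ++ [j]))) ∩
        interior (Set.Icc (a (w ++ [j'])) (b (w ++ [j']))) = ∅)

include hstep

lemma nest : ∀ (v u : List ℕ), MoranAdmissible n (u ++ v) → a u ≤ a (u ++ v) ∧ b (u ++ v) ≤ b u := by
  intro v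
  induction v using List.reverseRecOn with
  | nil => intro u h; simp
  | append_singleton v j ih =>
    intro u h
    rw [← List.append_assoc] at h
    obtain ⟨h1, h2, h3⟩ := adm_append.mp h
    have hs := hstep (u ++ v) h1 j h2 h3
    obtain ⟨ih1, ih2⟩ := ih u h1
    rw [← List.append_assoc]
    exact ⟨ih1.trans hs.1, hs.2.2.1.trans ih2⟩

lemma take_nest {w : List ℕ} (h : MoranAdmissible n w) (t : ℕ) :
    a (w.take t) ≤ a w ∧ b w ≤ b (w.take t) := by
  have := nest hstep (w.drop t) (w.take t) (by rwa [List.take_append_drop])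
  rwa [List.take_append_drop] at this

include hAB ha0 hb0

lemma alt_blt {w : List ℕ} (h : MoranAdmissible n w) : a w < b w := by
  rcases w.eq_nil_or_concat with rfl | ⟨u, j, rfl⟩
  · rw [ha0, hb0]; exact hAB
  · simp only [List.concat_eq_append] at h ⊢
    obtain ⟨h1, h2, h3⟩ := adm_append.mp h
    exact (hstep u h1 j h2 h3).2.1

lemma len_eq {w : List ℕ} (h : MoranAdmissible n w) :
    b w - a w = (B - A) * ∏ i ∈ Finset.Icc 1 w.length, c i := by
  induction w using List.reverseRecOn with
  | nil => simp [ha0, hb0]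
  | append_singleton u j ih =>
    obtain ⟨h1, h2, h3⟩ := adm_append.mp h
    have hs := (hstep u h1 j h2 h3).2.2.2
    rw [hs, ih h1]
    simp only [List.length_append, List.length_cons, List.length_nil]
    rw [Finset.prod_Icc_succ_top (by omega : 1 ≤ u.length + 1)]
    ring

include hdisj

lemma interiors_disj : ∀ (k : ℕ) (w w' : List ℕ), MoranAdmissible n w → MoranAdmissible n w' →
    w.length = k → w'.length = k → w ≠ w' →
    Set.Ioo (a w) (b w) ∩ Set.Ioo (a w') (b w') = ∅ := by
  intro k
  induction k with
  | zero =>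
    intro w w' _ _ hl hl' hne
    exact absurd (by rw [List.length_eq_zero_iff] at hl hl'; rw [hl, hl']) hne
  | succ k ih =>
    intro w w' hw hw' hl hl' hne
    rcases w.eq_nil_or_concat with rfl | ⟨u, j, rfl⟩
    · simp at hl
    rcases w'.eq_nil_or_concat with rfl | ⟨u', j', rfl⟩
    · simp at hl'
    simp only [List.concat_eq_append] at hw hw' hl hl' hne ⊢
    simp only [List.length_append, List.length_cons, List.length_nil] at hl hl'
    obtain ⟨h1, h2, h3⟩ := adm_append.mp hw
    obtain ⟨h1', h2', h3'⟩ := adm_append.mp hw'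
    by_cases huu : u = u'
    · subst huu
      have hjj : j ≠ j' := by
        intro hj; exact hne (by rw [hj])
      have := hdisj u h1 j j' h2 h3 h2' h3' hjj
      rwa [interior_Icc, interior_Icc] at this
    · have hd := ih u u' h1 h1' (by omega) (by omega) huu
      have s1 : Set.Ioo (a (u ++ [j])) (b (u ++ [j])) ⊆ Set.Ioo (a u) (b u) := by
        have hs := hstep u h1 j h2 h3
        exact Set.Ioo_subset_Ioo hs.1 hs.2.2.1
      have s2 : Set.Ioo (a (u' ++ [j'])) (b (u' ++ [j'])) ⊆ Set.Ioo (a u') (b u') := by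
        have hs := hstep u' h1' j' h2' h3'
        exact Set.Ioo_subset_Ioo hs.1 hs.2.2.1
      exact Set.eq_empty_of_subset_empty (hd ▸ Set.inter_subset_inter s1 s2)

omit hdisj
include hn

lemma point_in {w : List ℕ} (h : MoranAdmissible n w) :
    ∃ x : ℝ, x ∈ Set.Icc (a w) (b w) ∧ ∀ k : ℕ, ∃ w' : List ℕ,
      MoranAdmissible n w' ∧ w'.length = k ∧ x ∈ Set.Icc (a w') (b w') := by
  set g : ℕ → List ℕ := fun m => w ++ List.replicate m 1 with hg
  have hgsucc : ∀ m, g (m + 1) = g m ++ [1] := by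
    intro m
    simp only [hg, List.replicate_succ']
    rw [List.append_assoc]
  have hglen : ∀ m, (g m).length = w.length + m := by intro m; simp [hg]
  have hgadm : ∀ m, MoranAdmissible n (g m) := by
    intro m
    induction m with
    | zero => simpa [hg] using h
    | succ m ih =>
      rw [hgsucc]
      exact adm_append.mpr ⟨ih, le_refl 1, le_trans (by omega) (hn _ (by omega))⟩
  have hamono : Monotone (fun m => a (g m)) := by
    apply monotone_nat_of_le_succ
    intro m
    rw [hgsucc]
    exact (hstep (g m) (hgadm m) 1 (le_refl 1) (le_trans (by omega) (hn _ (by omega)))).1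
  have hbanti : Antitone (fun m => b (g m)) := by
    apply antitone_nat_of_succ_le
    intro m
    rw [hgsucc]
    exact (hstep (g m) (hgadm m) 1 (le_refl 1) (le_trans (by omega) (hn _ (by omega)))).2.2.1
  have hab : ∀ m m', a (g m) ≤ b (g m') := by
    intro m m'
    rcases le_total m m' with hmm | hmm
    · exact (hamono hmm).trans (alt_blt hAB ha0 hb0 hstep (hgadm m')).le
    · exact (alt_blt hAB ha0 hb0 hstep (hgadm m)).le.trans (hbanti hmm)
  have hbdd : BddAbove (Set.range fun m => a (g m)) := ⟨b (g 0), by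
    rintro x ⟨m, rfl⟩; exact hab m 0⟩
  set x := ⨆ m, a (g m) with hx
  have hax : ∀ m, a (g m) ≤ x := fun m => le_ciSup hbdd m
  have hxb : ∀ m, x ≤ b (g m) := fun m => ciSup_le (fun m' => hab m' m)
  have hxmem : ∀ m, x ∈ Set.Icc (a (g m)) (b (g m)) := fun m => ⟨hax m, hxb m⟩
  refine ⟨x, by simpa [hg] using hxmem 0, fun k => ?_⟩
  rcases le_or_gt w.length k with hk | hk
  · refine ⟨g (k - w.length), hgadm _, by rw [hglen]; omega, hxmem _⟩
  · refine ⟨w.take k, adm_take h k, by rw [List.length_take]; omega, ?_⟩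
    have hn4 := take_nest hstep h k
    have h0 := hxmem 0
    simp only [hg, List.replicate_zero, List.append_nil] at h0
    exact ⟨hn4.1.trans h0.1, h0.2.trans hn4.2⟩


end Moran

attribute [local instance] Classical.propDecidable
set_option linter.unusedSectionVars false
set_option maxHeartbeats 1000000

section Moran2

variable {n : ℕ → ℕ} {c : ℕ → ℝ} {a b : List ℕ → ℝ} {A B : ℝ}
variable (hn : ∀ k : ℕ, 1 ≤ k → 2 ≤ n k)
variable (hAB : A < B) (ha0 : a [] = A) (hb0 : b [] = B)
variable (hstep : ∀ w : List ℕ, MoranAdmissible n w → ∀ j : ℕ, 1 ≤ j → j ≤ n (w.length + 1) →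
      a w ≤ a (w ++ [j]) ∧ a (w ++ [j]) < b (w ++ [j]) ∧ b (w ++ [j]) ≤ b w ∧
      b (w ++ [j]) - a (w ++ [j]) = c (w.length + 1) * (b w - a w))
variable (hdisj : ∀ w : List ℕ, MoranAdmissible n w → ∀ j j' : ℕ, 1 ≤ j → j ≤ n (w.length + 1) →
      1 ≤ j' → j' ≤ n (w.length + 1) → j ≠ j' →
      interior (Set.Icc (a (w ++ [j])) (b (w ++ [j]))) ∩
        interior (Set.Icc (a (w ++ [j'])) (b (w ++ [j']))) = ∅)

include hAB ha0 hb0 hstep hdisj in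
/-- number of level-p intervals meeting a window of radius R' is at most 3, provided
`2R' ≤ L_p`. -/
lemma count_level (p : ℕ) (y R' : ℝ) (hR' : 0 < R')
    (h2R : 2 * R' ≤ (B - A) * ∏ i ∈ Finset.Icc 1 p, c i) :
    ((words n p).filter
      (fun w => (Set.Icc (a w) (b w) ∩ Set.Icc (y - R') (y + R')).Nonempty)).card ≤ 3 := by
  set L := (B - A) * ∏ i ∈ Finset.Icc 1 p, c i with hL
  have hLpos : 0 < L := lt_of_lt_of_le (by linarith) h2R
  set W := (words n p).filter
      (fun w => (Set.Icc (a w) (b w) ∩ Set.Icc (y - R') (y + R')).Nonempty) with hW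
  have hlen : ∀ w ∈ W, b w - a w = L := by
    intro w hw
    have := mem_words.mp (Finset.mem_filter.mp hw).1
    rw [len_eq hAB ha0 hb0 hstep this.1, this.2]
  have hsub : ∀ w ∈ W, Set.Ioo (a w) (b w) ⊆ Set.Icc (y - R' - L) (y + R' + L) := by
    intro w hw
    obtain ⟨t, ht1, ht2⟩ := (Finset.mem_filter.mp hw).2
    simp only [Set.mem_Icc] at ht1 ht2
    have hlw := hlen w hw
    intro z hz
    simp only [Set.mem_Ioo] at hz
    exact Set.mem_Icc.mpr ⟨by linarith [hz.1, ht1.2, ht2.1], by linarith [hz.2, ht1.1, ht2.2]⟩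
  have hdisjW : (↑W : Set (List ℕ)).PairwiseDisjoint (fun w => Set.Ioo (a w) (b w)) := by
    intro w hw w' hw' hne
    simp only [hW, Finset.coe_filter, Set.mem_setOf_eq] at hw hw'
    have h1 := mem_words.mp hw.1
    have h2 := mem_words.mp hw'.1
    rw [Function.onFun, Set.disjoint_iff_inter_eq_empty]
    exact interiors_disj hAB ha0 hb0 hstep hdisj p w w' h1.1 h2.1 h1.2 h2.2 hne
  have hvol : ∑ w ∈ W, MeasureTheory.volume (Set.Ioo (a w) (b w)) ≤
      MeasureTheory.volume (Set.Icc (y - R' - L) (y + R' + L)) := by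
    rw [← MeasureTheory.measure_biUnion_finset hdisjW (fun w _ => measurableSet_Ioo)]
    exact MeasureTheory.measure_mono (Set.iUnion₂_subset hsub)
  have hvol2 : (W.card : ENNReal) * ENNReal.ofReal L ≤ 3 * ENNReal.ofReal L := by
    calc (W.card : ENNReal) * ENNReal.ofReal L
        = ∑ _w ∈ W, ENNReal.ofReal L := by rw [Finset.sum_const, nsmul_eq_mul]
      _ = ∑ w ∈ W, MeasureTheory.volume (Set.Ioo (a w) (b w)) := by
          refine Finset.sum_congr rfl (fun w hw => ?_)
          rw [Real.volume_Ioo, hlen w hw]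
      _ ≤ MeasureTheory.volume (Set.Icc (y - R' - L) (y + R' + L)) := hvol
      _ = ENNReal.ofReal ((y + R' + L) - (y - R' - L)) := Real.volume_Icc
      _ ≤ ENNReal.ofReal (3 * L) := by
          apply ENNReal.ofReal_le_ofReal
          linarith
      _ = 3 * ENNReal.ofReal L := by
          rw [ENNReal.ofReal_mul (by norm_num)]
          norm_num
  have hcard : (W.card : ENNReal) ≤ 3 :=
    (ENNReal.mul_le_mul_iff_left (by simp [hLpos]) ENNReal.ofReal_ne_top).mp hvol2
  have h3 : (W.card : ENNReal) ≤ ((3 : ℕ) : ENNReal) := by simpa using hcard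
  exact_mod_cast h3

include hAB ha0 hb0 hstep hdisj in
lemma count_window (p q : ℕ) (hpq : p ≤ q) (y R' : ℝ) (hR' : 0 < R')
    (h2R : 2 * R' ≤ (B - A) * ∏ i ∈ Finset.Icc 1 p, c i) :
    ((words n q).filter
      (fun w => (Set.Icc (a w) (b w) ∩ Set.Icc (y - R') (y + R')).Nonempty)).card ≤
      3 * ∏ i ∈ Finset.Icc (p+1) q, n i := by
  set Wq := (words n q).filter
      (fun w => (Set.Icc (a w) (b w) ∩ Set.Icc (y - R') (y + R')).Nonempty) with hWq
  set Wp := (words n p).filter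
      (fun w => (Set.Icc (a w) (b w) ∩ Set.Icc (y - R') (y + R')).Nonempty) with hWp
  have hmaps : ∀ w ∈ Wq, w.take p ∈ Wp := by
    intro w hw
    obtain ⟨hw1, hw2⟩ := Finset.mem_filter.mp hw
    obtain ⟨hadm, hlw⟩ := mem_words.mp hw1
    refine Finset.mem_filter.mpr ⟨mem_words.mpr ⟨adm_take hadm p, by
      rw [List.length_take]; omega⟩, ?_⟩
    obtain ⟨t, ht1, ht2⟩ := hw2
    simp only [Set.mem_Icc] at ht1
    have htn := take_nest hstep hadm p
    exact ⟨t, Set.mem_Icc.mpr ⟨htn.1.trans ht1.1, ht1.2.trans htn.2⟩, ht2⟩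
  calc Wq.card = ∑ u ∈ Wp, (Wq.filter (fun w => w.take p = u)).card :=
        Finset.card_eq_sum_card_fiberwise hmaps
    _ ≤ ∑ _u ∈ Wp, ∏ i ∈ Finset.Icc (p+1) q, n i := by
        refine Finset.sum_le_sum (fun u _ => ?_)
        have hsub : Wq.filter (fun w => w.take p = u) ⊆
            (words n q).filter (fun w => w.take p = u) := by
          intro w hw
          simp only [Finset.mem_filter, hWq] at hw ⊢
          exact ⟨hw.1.1, hw.2⟩
        calc (Wq.filter (fun w => w.take p = u)).card
            ≤ ((words n q).filter (fun w => w.take p = u)).card := Finset.card_le_card hsub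
          _ ≤ ∏ i ∈ Finset.Icc (p+1) q, n i := by
              have hq : q = p + (q - p) := by omega
              calc ((words n q).filter (fun w => w.take p = u)).card
                  = ((words n (p + (q-p))).filter (fun w => w.take p = u)).card := by rw [← hq]
                _ ≤ ∏ i ∈ Finset.Icc (p+1) (p + (q-p)), n i := card_fiber_le p (q-p) u
                _ = ∏ i ∈ Finset.Icc (p+1) q, n i := by rw [← hq]
    _ = Wp.card * ∏ i ∈ Finset.Icc (p+1) q, n i := by rw [Finset.sum_const, smul_eq_mul]
    _ ≤ 3 * ∏ i ∈ Finset.Icc (p+1) q, n i :=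
        Nat.mul_le_mul_right _ (count_level hAB ha0 hb0 hstep hdisj p y R' hR' h2R)

include hn hAB ha0 hb0 hstep hdisj in
lemma coverNum_le {E : Set ℝ}
    (hEeq : E = ⋂ k : ℕ, ⋃ w ∈ {w : List ℕ | MoranAdmissible n w ∧ w.length = k},
      Set.Icc (a w) (b w))
    (r R : ℝ) (p q : ℕ) (hpq : p ≤ q) (hr : 0 < r) (hR : 0 < R)
    (hLq : (B - A) * ∏ i ∈ Finset.Icc 1 q, c i ≤ r)
    (h2R : 2 * R ≤ (B - A) * ∏ i ∈ Finset.Icc 1 p, c i) :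
    coverNum E r R ≤ 3 * ∏ i ∈ Finset.Icc (p+1) q, n i := by
  have hlevel : ∀ k : ℕ, E ⊆ ⋃ w ∈ {w : List ℕ | MoranAdmissible n w ∧ w.length = k},
      Set.Icc (a w) (b w) := by
    intro k
    rw [hEeq]
    exact Set.iInter_subset _ k
  apply csSup_le'
  rintro N ⟨x, rfl⟩
  set W := (words n q).filter
      (fun w => (Set.Icc (a w) (b w) ∩ Set.Icc ((x : ℝ) - R) ((x : ℝ) + R)).Nonempty) with hWdef
  have hpt : ∀ w ∈ W, ∃ z : ℝ, z ∈ E ∧ z ∈ Set.Icc (a w) (b w) := by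
    intro w hw
    obtain ⟨hadm, hlw⟩ := mem_words.mp (Finset.mem_filter.mp hw).1
    obtain ⟨z, hz1, hz2⟩ := point_in hn hAB ha0 hb0 hstep hadm
    refine ⟨z, ?_, hz1⟩
    rw [hEeq]
    refine Set.mem_iInter.mpr (fun k => ?_)
    obtain ⟨w', hw'1, hw'2, hw'3⟩ := hz2 k
    exact Set.mem_biUnion (show w' ∈ {w : List ℕ | MoranAdmissible n w ∧ w.length = k} from ⟨hw'1, hw'2⟩) hw'3
  choose pt hptE hptIcc using hpt
  set s : Finset E := W.attach.image (fun w => (⟨pt w.1 w.2, hptE w.1 w.2⟩ : E)) with hs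
  have hcover : Metric.closedBall x R ⊆ ⋃ y ∈ s, Metric.closedBall y r := by
    intro z hz
    rw [Metric.mem_closedBall, Subtype.dist_eq, Real.dist_eq] at hz
    have hz' := abs_le.mp hz
    obtain ⟨w, hw, hzw⟩ := Set.mem_iUnion₂.mp (hlevel q z.2)
    simp only [Set.mem_Icc] at hzw
    have hwW : w ∈ W := by
      refine Finset.mem_filter.mpr ⟨mem_words.mpr hw, ⟨(z : ℝ), Set.mem_Icc.mpr hzw,
        Set.mem_Icc.mpr ⟨by linarith [hz'.1], by linarith [hz'.2]⟩⟩⟩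
    refine Set.mem_biUnion (Finset.mem_image.mpr ⟨⟨w, hwW⟩, Finset.mem_attach _ _, rfl⟩) ?_
    rw [Metric.mem_closedBall, Subtype.dist_eq, Real.dist_eq]
    have h1 := hptIcc w hwW
    simp only [Set.mem_Icc] at h1
    have hlw : b w - a w = (B - A) * ∏ i ∈ Finset.Icc 1 q, c i := by
      obtain ⟨hadm, hlq⟩ := mem_words.mp (Finset.mem_filter.mp hwW).1
      rw [len_eq hAB ha0 hb0 hstep hadm, hlq]
    rw [abs_le]
    constructor
    · linarith [hzw.1, h1.2]
    · linarith [hzw.2, h1.1]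
  refine le_trans (Nat.sInf_le ⟨s, rfl, hcover⟩) ?_
  calc s.card ≤ W.attach.card := Finset.card_image_le
    _ = W.card := Finset.card_attach
    _ ≤ 3 * ∏ i ∈ Finset.Icc (p+1) q, n i :=
        count_window hAB ha0 hb0 hstep hdisj p q hpq (x : ℝ) R hR h2R

end Moran2

end MoranAux

open MoranAux

set_option maxHeartbeats 4000000 in
/-- Upper bound: if `E ∈ M(J, {n_k}, {c_k})` with `log c_k / log (c_1 ⋯ c_k) → 0`, then
for `δ ∈ (0,1)`, `h_E(δ) ≤ limsup_{q→∞} max_{1 ≤ p ≤ l_{q,δ}} s_{p,q}`; more precisely,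
for every `s` strictly greater than this limsup there are `b, C > 0` with
`N_{r,R}(E) ≤ C (R/r)^s` for all `0 < r < r^(1-δ) ≤ R < b`. -/
theorem hFun_moran_le (J : Set ℝ) (n : ℕ → ℕ) (c : ℕ → ℝ)
    (hn : ∀ k : ℕ, 1 ≤ k → 2 ≤ n k)
    (hc : ∀ k : ℕ, 1 ≤ k → 0 < c k ∧ c k ≤ 1 / (n k : ℝ))
    (hlim : Filter.Tendsto
      (fun k : ℕ => Real.log (c k) / Real.log (∏ i ∈ Finset.Icc 1 k, c i))
      Filter.atTop (𝓝 0))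
    (E : Set ℝ) (hE : IsMoranSet J n c E) (δ : ℝ) (hδ : δ ∈ Set.Ioo (0 : ℝ) 1) :
    hFun E δ ≤ Filter.limsup (fun q : ℕ =>
        sSup {s : ℝ | ∃ p : ℕ, 1 ≤ p ∧ p ≤ lIdx c δ q ∧ s = spq n c p q}) Filter.atTop ∧
      ∀ s : ℝ,
        Filter.limsup (fun q : ℕ =>
          sSup {t : ℝ | ∃ p : ℕ, 1 ≤ p ∧ p ≤ lIdx c δ q ∧ t = spq n c p q})
          Filter.atTop < s →
        ∃ b C : ℝ, 0 < b ∧ 0 < C ∧ ∀ r R : ℝ,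
          0 < r → r < r ^ (1 - δ) → r ^ (1 - δ) ≤ R → R < b →
            (coverNum E r R : ℝ) ≤ C * (R / r) ^ s := by
  classical
  obtain ⟨hδ0, hδ1⟩ := hδ
  obtain ⟨A, B, hAB, hJ, a, b, ha0, hb0, hstep, hdisj, hEeq⟩ := hE
  -- basic facts about c and the products P k
  set P : ℕ → ℝ := fun k => ∏ i ∈ Finset.Icc 1 k, c i with hPdef
  have hnc : ∀ k : ℕ, 1 ≤ k → (2 : ℝ) ≤ (n k : ℝ) := by
    intro k hk; exact_mod_cast hn k hk
  have hcpos : ∀ k : ℕ, 1 ≤ k → 0 < c k := fun k hk => (hc k hk).1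
  have hchalf : ∀ k : ℕ, 1 ≤ k → c k ≤ 1/2 := by
    intro k hk
    refine (hc k hk).2.trans ?_
    rw [div_le_div_iff₀ (by linarith [hnc k hk]) (by norm_num)]
    linarith [hnc k hk]
  have hc1 : ∀ k : ℕ, 1 ≤ k → c k < 1 := fun k hk => lt_of_le_of_lt (hchalf k hk) (by norm_num)
  have hPpos : ∀ k, 0 < P k := by
    intro k
    exact Finset.prod_pos (fun i hi => hcpos i (Finset.mem_Icc.mp hi).1)
  have hP0 : P 0 = 1 := by simp [hPdef]
  have hPsucc : ∀ k, P (k+1) = P k * c (k+1) := by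
    intro k
    simp only [hPdef]
    rw [Finset.prod_Icc_succ_top (by omega : 1 ≤ k + 1)]
  have hPanti : ∀ {j k : ℕ}, j ≤ k → P k ≤ P j := by
    intro j k hjk
    induction k with
    | zero => simp_all
    | succ k ih =>
      rcases Nat.lt_or_ge j (k+1) with h | h
      · rw [hPsucc k]
        calc P k * c (k+1) ≤ P k * 1 := by
              have := (hc1 (k+1) (by omega)).le
              have := (hcpos (k+1) (by omega)).le
              nlinarith [hPpos k]
          _ = P k := mul_one _
          _ ≤ P j := ih (by omega)
      · have hj : j = k + 1 := by omega
        rw [hj]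
  have hPle1 : ∀ k, P k ≤ 1 := fun k => hP0 ▸ hPanti (Nat.zero_le k)
  have hPhalf : ∀ k, 1 ≤ k → P k ≤ 1/2 := by
    intro k hk
    calc P k ≤ P 1 := hPanti hk
      _ = c 1 := by simp [hPdef]
      _ ≤ 1/2 := hchalf 1 le_rfl
  have hPlt1 : ∀ k, 1 ≤ k → P k < 1 := fun k hk => lt_of_le_of_lt (hPhalf k hk) (by norm_num)
  have hPpow : ∀ k, P k ≤ (1/2)^k := by
    intro k
    induction k with
    | zero => simp [hP0]
    | succ k ih =>
      rw [hPsucc, pow_succ]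
      have h1 := hchalf (k+1) (by omega)
      have h2 := (hcpos (k+1) (by omega)).le
      have h3 := (hPpos k).le
      nlinarith
  have hsplitP : ∀ {j k : ℕ}, j ≤ k → P k = P j * ∏ i ∈ Finset.Icc (j+1) k, c i := by
    intro j k hjk
    simp only [hPdef, Finset.Icc_add_one_left_eq_Ioc]
    exact (Finset.prod_Ioc_consecutive _ (Nat.zero_le j) hjk).symm
  -- facts about middle products
  have hmidpos : ∀ {j k : ℕ}, 1 ≤ j → 0 < ∏ i ∈ Finset.Icc j k, c i := by
    intro j k hj
    exact Finset.prod_pos (fun i hi => hcpos i (le_trans hj (Finset.mem_Icc.mp hi).1))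
  have hmidn2 : ∀ {j k : ℕ}, 1 ≤ j → j ≤ k → (2:ℝ) ≤ ∏ i ∈ Finset.Icc j k, (n i : ℝ) := by
    intro j k hj hjk
    have h1 : ∀ i ∈ Finset.Icc j k, (2:ℕ) ≤ n i :=
      fun i hi => hn i (le_trans hj (Finset.mem_Icc.mp hi).1)
    have h2 : (2:ℕ)^(Finset.Icc j k).card ≤ ∏ i ∈ Finset.Icc j k, n i := by
      rw [← Finset.prod_const]
      exact Finset.prod_le_prod' h1
    have h3 : 1 ≤ (Finset.Icc j k).card := by
      rw [Nat.card_Icc]; omega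
    have h4 : (2:ℕ) ≤ ∏ i ∈ Finset.Icc j k, n i :=
      le_trans (le_trans (by norm_num) (Nat.pow_le_pow_right (by norm_num) h3)) h2
    calc (2:ℝ) ≤ ((∏ i ∈ Finset.Icc j k, n i : ℕ) : ℝ) := by exact_mod_cast h4
      _ = ∏ i ∈ Finset.Icc j k, (n i : ℝ) := by rw [Nat.cast_prod]
  have hmidc : ∀ {j k : ℕ}, 1 ≤ j → j ≤ k →
      ∏ i ∈ Finset.Icc j k, c i ≤ (∏ i ∈ Finset.Icc j k, (n i : ℝ))⁻¹ := by
    intro j k hj hjk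
    rw [← Finset.prod_inv_distrib]
    refine Finset.prod_le_prod (fun i hi => (hcpos i (le_trans hj (Finset.mem_Icc.mp hi).1)).le)
      (fun i hi => ?_)
    have := (hc i (le_trans hj (Finset.mem_Icc.mp hi).1)).2
    rwa [one_div] at this
  have hmidlog : ∀ {j k : ℕ}, 1 ≤ j → j ≤ k →
      Real.log 2 ≤ -Real.log (∏ i ∈ Finset.Icc j k, c i) := by
    intro j k hj hjk
    have h1 : Real.log (∏ i ∈ Finset.Icc j k, c i) ≤
        Real.log (∏ i ∈ Finset.Icc j k, (n i : ℝ))⁻¹ :=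
      Real.log_le_log (hmidpos hj) (hmidc hj hjk)
    rw [Real.log_inv] at h1
    have h2 : Real.log 2 ≤ Real.log (∏ i ∈ Finset.Icc j k, (n i : ℝ)) :=
      Real.log_le_log (by norm_num) (hmidn2 hj hjk)
    linarith
  have hlog2 : (0:ℝ) < Real.log 2 := Real.log_pos (by norm_num)
  -- spq bounds
  have hspq01 : ∀ {j k : ℕ}, 1 ≤ j → j ≤ k → 0 ≤ spq n c j k ∧ spq n c j k ≤ 1 := by
    intro j k hj hjk
    have hd : 0 < -Real.log (∏ i ∈ Finset.Icc j k, c i) :=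
      lt_of_lt_of_le hlog2 (hmidlog hj hjk)
    have hnum : 0 ≤ Real.log (∏ i ∈ Finset.Icc j k, (n i : ℝ)) :=
      le_trans hlog2.le (Real.log_le_log (by norm_num) (hmidn2 hj hjk))
    unfold spq
    constructor
    · exact div_nonneg hnum hd.le
    · rw [div_le_one hd]
      have h1 : Real.log (∏ i ∈ Finset.Icc j k, c i) ≤
          -Real.log (∏ i ∈ Finset.Icc j k, (n i : ℝ)) := by
        have := Real.log_le_log (hmidpos hj) (hmidc hj hjk)
        rwa [Real.log_inv] at this
      linarith
  -- lIdx facts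
  have hlIdx_le : ∀ q : ℕ, lIdx c δ q ≤ q := by
    intro q
    exact csSup_le' (fun x hx => hx.2.1)
  have hlIdx_ge1 : ∀ q : ℕ, 1 ≤ q → 1 ≤ lIdx c δ q := by
    intro q hq
    refine le_csSup ⟨q, fun x hx => hx.2.1⟩ ?_
    refine ⟨le_rfl, hq, ?_⟩
    rw [div_self (ne_of_lt (Real.log_neg (hPpos q) (hPlt1 q hq)))]
    exact hδ1
  -- the sequence S
  set S : ℕ → ℝ := fun q =>
    sSup {t : ℝ | ∃ p : ℕ, 1 ≤ p ∧ p ≤ lIdx c δ q ∧ t = spq n c p q} with hSdef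
  have hSle1 : ∀ q, S q ≤ 1 := by
    intro q
    refine Real.sSup_le (fun t ht => ?_) (by norm_num)
    obtain ⟨p, hp1, hp2, rfl⟩ := ht
    exact (hspq01 hp1 (le_trans hp2 (hlIdx_le q))).2
  have hSbddA : ∀ q, BddAbove {t : ℝ | ∃ p : ℕ, 1 ≤ p ∧ p ≤ lIdx c δ q ∧ t = spq n c p q} := by
    intro q
    refine ⟨1, fun t ht => ?_⟩
    obtain ⟨p, hp1, hp2, rfl⟩ := ht
    exact (hspq01 hp1 (le_trans hp2 (hlIdx_le q))).2
  have hS0 : ∀ q, 1 ≤ q → 0 ≤ S q := by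
    intro q hq
    have hmem : spq n c 1 q ∈ {t : ℝ | ∃ p : ℕ, 1 ≤ p ∧ p ≤ lIdx c δ q ∧ t = spq n c p q} :=
      ⟨1, le_rfl, hlIdx_ge1 q hq, rfl⟩
    exact le_trans (hspq01 le_rfl hq).1 (le_csSup (hSbddA q) hmem)
  have hSboundU : Filter.IsBoundedUnder (· ≤ ·) Filter.atTop S :=
    ⟨1, Filter.eventually_map.mpr (Filter.Eventually.of_forall hSle1)⟩
  have hSboundL : Filter.IsBoundedUnder (· ≥ ·) Filter.atTop S :=
    ⟨0, Filter.eventually_map.mpr (by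
      filter_upwards [Filter.eventually_ge_atTop 1] with q hq
      exact hS0 q hq)⟩
  set Lstar : ℝ := Filter.limsup S Filter.atTop with hLstar
  have hL0 : 0 ≤ Lstar := by
    refine Filter.le_limsup_of_frequently_le ?_ hSboundU
    refine Filter.Eventually.frequently ?_
    filter_upwards [Filter.eventually_ge_atTop 1] with q hq
    exact hS0 q hq
  have hL1 : Lstar ≤ 1 :=
    Filter.limsup_le_of_le (hSboundL.isCoboundedUnder_flip) (Filter.Eventually.of_forall hSle1)
  -- the main quantitative claim
  have key : ∀ s : ℝ, Lstar < s → ∃ b C : ℝ, 0 < b ∧ 0 < C ∧ ∀ r R : ℝ,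
      0 < r → r < r ^ (1 - δ) → r ^ (1 - δ) ≤ R → R < b →
        (coverNum E r R : ℝ) ≤ C * (R / r) ^ s := by
    intro s hs
    set M : ℝ := max 1 (B - A) with hM
    have hM1 : 1 ≤ M := le_max_left _ _
    have hBA : 0 < B - A := by linarith
    have hBAM : B - A ≤ M := le_max_right _ _
    have hMpos : 0 < M := by linarith
    set lam : ℝ := 2 * M with hlam
    have hlam2 : 2 ≤ lam := by nlinarith
    have hlam1 : 1 ≤ lam := by linarith
    have hlampos : 0 < lam := by linarith
    set s₁ : ℝ := (Lstar + min s 2) / 2 with hs₁def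
    have hmin0 : 0 < min s 2 := lt_min (lt_of_le_of_lt hL0 hs) (by norm_num)
    have hLmin : Lstar < min s 2 := lt_min hs (by linarith)
    have hs₁L : Lstar < s₁ := by rw [hs₁def]; linarith
    have hs₁s : s₁ < s := by
      have h1 : s₁ < min s 2 := by rw [hs₁def]; linarith
      exact lt_of_lt_of_le h1 (min_le_left _ _)
    have hs₁0 : 0 < s₁ := by rw [hs₁def]; linarith
    have hs₁2 : s₁ ≤ 2 := by
      have := min_le_right s 2
      rw [hs₁def]; linarith
    set g : ℝ := s - s₁ with hgdef
    have hg0 : 0 < g := by rw [hgdef]; linarith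
    set ε : ℝ := min (1/8) (δ * g / 8) with hεdef
    have hε0 : 0 < ε := lt_min (by norm_num) (by positivity)
    have hε8 : 8 * ε ≤ 1 := by
      have := min_le_left (1/8 : ℝ) (δ * g / 8)
      rw [hεdef]; linarith
    have hεg : 8 * ε ≤ δ * g := by
      have := min_le_right (1/8 : ℝ) (δ * g / 8)
      rw [hεdef]; linarith
    have hεhalf : ε ≤ 1/2 := by linarith
    obtain ⟨N₁, hN₁⟩ := Metric.tendsto_atTop.mp hlim ε hε0
    obtain ⟨N₂, hN₂⟩ := Filter.eventually_atTop.mp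
      (Filter.eventually_lt_of_limsup_lt hs₁L hSboundU)
    set K : ℕ := max N₁ N₂ with hK
    have hN1K : N₁ ≤ K := le_max_left _ _
    have hN2K : N₂ ≤ K := le_max_right _ _
    have hεk : ∀ k, K + 1 ≤ k → |Real.log (c k) / Real.log (P k)| < ε := by
      intro k hk
      have h1 : N₁ ≤ k := le_trans hN1K (by omega)
      have := hN₁ k h1
      rwa [Real.dist_eq, sub_zero] at this
    have hSq : ∀ q, K + 1 ≤ q → S q < s₁ := by
      intro q hq
      exact hN₂ q (le_trans hN2K (by omega))
    refine ⟨(B - A) * P (K+1) / lam, 3 * lam^2 * M,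
      div_pos (mul_pos hBA (hPpos _)) hlampos, by positivity, ?_⟩
    intro r R hr hrr hrR hRb
    have hR0 : 0 < R := lt_of_lt_of_le (Real.rpow_pos_of_pos hr _) hrR
    have hrR' : r < R := lt_of_lt_of_le hrr hrR
    have hr1 : r < 1 := by
      by_contra h
      push_neg at h
      have h2 : r ^ (1-δ) ≤ r ^ (1:ℝ) := Real.rpow_le_rpow_of_exponent_le h (by linarith)
      rw [Real.rpow_one] at h2
      linarith
    have hrb : r < (B-A) * P (K+1) / lam := lt_trans hrR' hRb
    have hrBA : r < B - A := by
      have h1 : (B-A) * P (K+1) ≤ (B-A) := by nlinarith [hPle1 (K+1), hPpos (K+1)]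
      have h2 : (B-A) * P (K+1) / lam ≤ (B-A) / 2 := by
        apply div_le_div₀ (by linarith) h1 (by norm_num) hlam2
      linarith
    -- the level q
    have hex_q : ∃ k, (B - A) * P k ≤ r := by
      obtain ⟨m, hm⟩ := exists_pow_lt_of_lt_one (show (0:ℝ) < r/(B-A) by positivity)
        (show (1:ℝ)/2 < 1 by norm_num)
      refine ⟨m, ?_⟩
      have h1 := hPpow m
      have h2 : (B-A) * ((1/2:ℝ)^m) < (B-A) * (r/(B-A)) := by
        apply mul_lt_mul_of_pos_left hm hBA
      have h3 : (B-A) * (r/(B-A)) = r := by field_simp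
      nlinarith [hPpos m]
    set q : ℕ := Nat.find hex_q with hqdef
    have hq1 : (B - A) * P q ≤ r := Nat.find_spec hex_q
    have hq_min : ∀ k, k < q → r < (B - A) * P k := by
      intro k hk
      exact lt_of_not_ge (Nat.find_min hex_q hk)
    have hqK : K + 2 ≤ q := by
      by_contra h
      push_neg at h
      have h1 : P (K+1) ≤ P q := hPanti (by omega)
      have h2 : lam * r < (B-A) * P (K+1) := by
        rw [lt_div_iff₀ hlampos] at hrb
        linarith [mul_comm r lam]
      nlinarith [hq1, hBA]
    -- the level p
    have hex_p : ∃ k, (B - A) * P k < lam * R := by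
      refine ⟨q, lt_of_le_of_lt hq1 ?_⟩
      have h1 : R ≤ lam * R := le_mul_of_one_le_left hR0.le hlam1
      linarith
    set p1 : ℕ := Nat.find hex_p with hp1def
    have hp1 : (B - A) * P p1 < lam * R := Nat.find_spec hex_p
    have hp_min : ∀ k, k < p1 → lam * R ≤ (B-A) * P k := by
      intro k hk
      exact not_lt.mp (Nat.find_min hex_p hk)
    have hp1K : K + 2 ≤ p1 := by
      by_contra h
      push_neg at h
      have h1 : P (K+1) ≤ P p1 := hPanti (by omega)
      have h2 : lam * R < (B-A) * P (K+1) := by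
        rw [lt_div_iff₀ hlampos] at hRb
        linarith [mul_comm R lam]
      nlinarith
    set p : ℕ := p1 - 1 with hpdef
    have hp1eq : p + 1 = p1 := by omega
    have hpK : K + 1 ≤ p := by omega
    have hp1' : 1 ≤ p := by omega
    have hLp : lam * R ≤ (B - A) * P p := hp_min p (by omega)
    have hLp1 : (B - A) * P (p + 1) < lam * R := by rw [hp1eq]; exact hp1
    have hpq : p + 1 ≤ q := by
      by_contra h
      push_neg at h
      have h1 : P p ≤ P q := hPanti (by omega)
      nlinarith [hq1, hLp, hR0, hrR', hlam1, hBA]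
    -- epsilon estimates on letters
    have hlogc : ∀ k, K + 2 ≤ k → -Real.log (c k) ≤ 2 * ε * (-Real.log (P (k-1))) := by
      intro k hk
      have hk1 : 1 ≤ k := by omega
      have hPk : P k = P (k-1) * c k := by
        have h1 := hPsucc (k-1)
        rwa [show k - 1 + 1 = k by omega] at h1
      have hu : 0 < -Real.log (c k) := by
        have := Real.log_neg (hcpos k hk1) (hc1 k hk1)
        linarith
      have hv' : 0 ≤ -Real.log (P (k-1)) := by
        have : Real.log (P (k-1)) ≤ 0 := Real.log_nonpos (hPpos _).le (hPle1 _)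
        linarith
      have hv : -Real.log (P k) = -Real.log (P (k-1)) + -Real.log (c k) := by
        rw [hPk, Real.log_mul (ne_of_gt (hPpos _)) (ne_of_gt (hcpos k hk1))]
        ring
      have hvpos : 0 < -Real.log (P k) := by linarith
      have hεk' := hεk k (by omega)
      have hq2 : -Real.log (c k) / -Real.log (P k) < ε := by
        calc -Real.log (c k) / -Real.log (P k) = Real.log (c k) / Real.log (P k) :=
              neg_div_neg_eq _ _
          _ ≤ |Real.log (c k) / Real.log (P k)| := le_abs_self _
          _ < ε := hεk'
      have h3 : -Real.log (c k) < ε * (-Real.log (P k)) := by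
        rwa [div_lt_iff₀ hvpos] at hq2
      have h4 : -Real.log (c k) < ε * (-Real.log (P (k-1))) + ε * (-Real.log (c k)) := by
        rw [hv, mul_add] at h3
        linarith
      have h5 : ε * (-Real.log (c k)) ≤ (1/2) * (-Real.log (c k)) :=
        mul_le_mul_of_nonneg_right hεhalf hu.le
      linarith
    -- log comparisons
    have hXpos : 0 < Real.log ((B-A)/r) := by
      apply Real.log_pos
      rw [lt_div_iff₀ hr]
      linarith
    have hlogPp : -Real.log (P p) ≤ Real.log ((B-A)/(lam * R)) := by
      have h1 : lam * R / (B-A) ≤ P p := by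
        rw [div_le_iff₀ hBA]
        linarith [mul_comm (P p) (B-A)]
      have h2 : Real.log (lam*R/(B-A)) ≤ Real.log (P p) :=
        Real.log_le_log (by positivity) h1
      have h3 : Real.log ((B-A)/(lam*R)) = -Real.log (lam*R/(B-A)) := by
        rw [← Real.log_inv]
        congr 1
        field_simp
      linarith
    have hlogPq1 : -Real.log (P (q-1)) ≤ Real.log ((B-A)/r) := by
      have h0 := hq_min (q-1) (by omega)
      have h1 : r / (B-A) < P (q-1) := by
        rw [div_lt_iff₀ hBA]
        linarith [mul_comm (P (q-1)) (B-A)]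
      have h2 : Real.log (r/(B-A)) ≤ Real.log (P (q-1)) :=
        Real.log_le_log (by positivity) h1.le
      have h3 : Real.log ((B-A)/r) = -Real.log (r/(B-A)) := by
        rw [← Real.log_inv]
        congr 1
        field_simp
      linarith
    have hlamR_r : Real.log ((B-A)/(lam*R)) ≤ Real.log ((B-A)/r) := by
      apply Real.log_le_log (by positivity)
      have h1 : r ≤ lam * R := by nlinarith
      gcongr
    have hvq : 0 < -Real.log (P q) := by
      have := Real.log_neg (hPpos q) (hPlt1 q (by omega))
      linarith
    have hXq : Real.log ((B-A)/r) ≤ -Real.log (P q) := by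
      have h1 : P q ≤ r/(B-A) := by
        rw [le_div_iff₀ hBA]
        linarith [mul_comm (P q) (B-A)]
      have h2 : Real.log (P q) ≤ Real.log (r/(B-A)) := Real.log_le_log (hPpos q) h1
      have h3 : Real.log ((B-A)/r) = -Real.log (r/(B-A)) := by
        rw [← Real.log_inv]
        congr 1
        field_simp
      linarith
    have hlogR : (1-δ) * Real.log r ≤ Real.log R := by
      have h1 := Real.log_le_log (Real.rpow_pos_of_pos hr _) hrR
      rwa [Real.log_rpow hr] at h1
    -- the lIdx condition
    have hδcond : δ < Real.log (∏ i ∈ Finset.Icc (p+1) q, c i) /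
        Real.log (∏ i ∈ Finset.Icc 1 q, c i) := by
      have hZeq : ∏ i ∈ Finset.Icc (p+1) q, c i = P q / P p := by
        rw [hsplitP (show p ≤ q by omega), mul_div_cancel_left₀ _ (ne_of_gt (hPpos p))]
      have hupos : 0 ≤ -Real.log (P p) := by
        have : Real.log (P p) ≤ 0 := Real.log_nonpos (hPpos _).le (hPle1 _)
        linarith
      have hloglam : δ * Real.log (B-A) < Real.log lam := by
        have h2 : Real.log lam = Real.log 2 + Real.log M :=
          Real.log_mul two_ne_zero (by positivity)
        rcases le_or_gt (Real.log (B-A)) 0 with h | h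
        · have h3 : 0 ≤ Real.log M := Real.log_nonneg hM1
          have h4 : δ * Real.log (B-A) ≤ 0 := mul_nonpos_of_nonneg_of_nonpos hδ0.le h
          rw [h2]
          linarith [hlog2]
        · have h1 : Real.log (B-A) ≤ Real.log M := Real.log_le_log hBA hBAM
          have h4 : δ * Real.log (B-A) < 1 * Real.log (B-A) :=
            mul_lt_mul_of_pos_right hδ1 h
          rw [h2]
          linarith [hlog2]
      have hexp1 : Real.log ((B-A)/(lam*R)) =
          Real.log (B-A) - Real.log lam - Real.log R := by
        rw [Real.log_div (ne_of_gt hBA) (by positivity),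
          Real.log_mul (ne_of_gt hlampos) (ne_of_gt hR0)]
        ring
      have hexp2 : Real.log ((B-A)/r) = Real.log (B-A) - Real.log r :=
        Real.log_div (ne_of_gt hBA) (ne_of_gt hr)
      have hkey2 : -Real.log (P p) < (1-δ) * (-Real.log (P q)) := by
        have c1 : -Real.log (P p) ≤ Real.log (B-A) - Real.log lam - Real.log R := by
          rw [← hexp1]; exact hlogPp
        have c2 : Real.log (B-A) - Real.log lam - Real.log R ≤
            Real.log (B-A) - Real.log lam - (1-δ) * Real.log r := by linarith
        have c3 : Real.log (B-A) - Real.log lam - (1-δ) * Real.log r <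
            (1-δ) * (Real.log (B-A) - Real.log r) := by
          have e : (1-δ) * (Real.log (B-A) - Real.log r)
              = Real.log (B-A) - δ * Real.log (B-A) - (1-δ) * Real.log r := by ring
          rw [e]
          linarith [hloglam]
        have c4 : (1-δ) * (Real.log (B-A) - Real.log r) ≤ (1-δ) * (-Real.log (P q)) := by
          have hX2 : Real.log (B-A) - Real.log r ≤ -Real.log (P q) := by
            rw [← hexp2]
            exact hXq
          exact mul_le_mul_of_nonneg_left hX2 (by linarith)
        linarith
      rw [hZeq, Real.log_div (ne_of_gt (hPpos q)) (ne_of_gt (hPpos p))]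
      rw [show Real.log (∏ i ∈ Finset.Icc 1 q, c i) = Real.log (P q) from rfl]
      have hlq : Real.log (P q) < 0 := by linarith
      rw [lt_div_iff_of_neg hlq]
      have e2 : (1-δ) * (-Real.log (P q)) = -Real.log (P q) + δ * Real.log (P q) := by ring
      rw [e2] at hkey2
      linarith
    have hlIdxp : p + 1 ≤ lIdx c δ q := by
      refine le_csSup ⟨q, fun x hx => hx.2.1⟩ ?_
      exact ⟨by omega, hpq, hδcond⟩
    have hs'le : spq n c (p+1) q ≤ s₁ := by
      have hmem : spq n c (p+1) q ∈
          {t : ℝ | ∃ p', 1 ≤ p' ∧ p' ≤ lIdx c δ q ∧ t = spq n c p' q} :=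
        ⟨p+1, by omega, hlIdxp, rfl⟩
      exact le_trans (le_csSup (hSbddA q) hmem) (hSq q (by omega)).le
    -- the product identity and bounds
    set Y : ℝ := ∏ i ∈ Finset.Icc (p+1) q, (n i : ℝ) with hYdef
    set Z : ℝ := ∏ i ∈ Finset.Icc (p+1) q, c i with hZdef
    have hZpos : 0 < Z := hmidpos (by omega)
    have hZeq : Z = P q / P p := by
      rw [hZdef, hsplitP (show p ≤ q by omega), mul_div_cancel_left₀ _ (ne_of_gt (hPpos p))]
    have hYpos : (0:ℝ) < Y := lt_of_lt_of_le (by norm_num) (hmidn2 (by omega) hpq)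
    have hdenpos : 0 < -Real.log Z := lt_of_lt_of_le hlog2 (hmidlog (by omega) hpq)
    have hYeq : Y = (P p / P q) ^ spq n c (p+1) q := by
      have h1 : Real.log (P p / P q) = -Real.log Z := by
        rw [hZeq, ← Real.log_inv, inv_div]
      rw [Real.rpow_def_of_pos (div_pos (hPpos p) (hPpos q)), h1]
      unfold spq
      rw [show Real.log (∏ i ∈ Finset.Icc (p+1) q, (n i:ℝ)) = Real.log Y from rfl,
        show ∏ i ∈ Finset.Icc (p+1) q, c i = Z from rfl]
      rw [mul_div_cancel₀ _ (ne_of_gt hdenpos)]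
      rw [Real.exp_log hYpos]
    have hbase1 : 1 ≤ P p / P q := by
      rw [le_div_iff₀ (hPpos q)]
      simpa using hPanti (show p ≤ q by omega)
    have step1 : Y ≤ (P p / P q) ^ s₁ := by
      rw [hYeq]
      exact Real.rpow_le_rpow_of_exponent_le hbase1 hs'le
    have hcp1 : 0 < c (p+1) := hcpos _ (by omega)
    have hcq : 0 < c q := hcpos _ (by omega)
    have hPpPq : P p / P q ≤ lam * (R/r) * (c (p+1) * c q)⁻¹ := by
      have hA1 : P p * c (p+1) * (B - A) < lam * R := by
        have h1 := hLp1
        rw [hPsucc p] at h1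
        calc P p * c (p+1) * (B - A) = (B - A) * (P p * c (p+1)) := by ring
          _ < lam * R := h1
      have hA2 : r * c q < P q * (B - A) := by
        have h0 := hq_min (q-1) (by omega)
        have h1 : P q = P (q-1) * c q := by
          have h2 := hPsucc (q-1)
          rwa [show q - 1 + 1 = q by omega] at h2
        rw [h1]
        calc r * c q < (B - A) * P (q-1) * c q := by
              exact mul_lt_mul_of_pos_right h0 hcq
          _ = P (q-1) * c q * (B - A) := by ring
      have hA3 : (P p * c (p+1) * (B-A)) * (r * c q) < (lam * R) * (P q * (B-A)) := by
        apply mul_lt_mul'' hA1 hA2 (mul_nonneg (mul_nonneg (hPpos p).le hcp1.le) hBA.le)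
          (mul_nonneg hr.le hcq.le)
      have hA4 : P p * (r * (c (p+1) * c q)) < lam * R * P q := by
        have e3 : (P p * c (p+1) * (B-A)) * (r * c q)
            = (P p * (r * (c (p+1) * c q))) * (B-A) := by ring
        have e4 : (lam * R) * (P q * (B-A)) = (lam * R * P q) * (B-A) := by ring
        rw [e3, e4] at hA3
        exact (mul_lt_mul_iff_left₀ hBA).mp hA3
      rw [div_le_iff₀ (hPpos q)]
      have heq : lam * (R/r) * (c (p+1) * c q)⁻¹ * P q =
          (lam * R * P q) / (r * (c (p+1) * c q)) := by
        field_simp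
      rw [heq, le_div_iff₀ (mul_pos hr (mul_pos hcp1 hcq))]
      exact hA4.le
    have step2 : (P p / P q)^s₁ ≤ (lam * (R/r) * (c (p+1) * c q)⁻¹)^s₁ :=
      Real.rpow_le_rpow (by positivity) hPpPq hs₁0.le
    have step3 : (lam * (R/r) * (c (p+1)*c q)⁻¹)^s₁
        = lam^s₁ * (R/r)^s₁ * ((c (p+1)*c q)⁻¹)^s₁ := by
      rw [Real.mul_rpow (by positivity) (by positivity),
        Real.mul_rpow (by positivity) (by positivity)]
    have hlams : lam ^ s₁ ≤ lam ^ 2 := by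
      have h1 : lam ^ s₁ ≤ lam ^ (2:ℝ) := Real.rpow_le_rpow_of_exponent_le hlam1 hs₁2
      rwa [show (2:ℝ) = ((2:ℕ):ℝ) by norm_num, Real.rpow_natCast] at h1
    have hinv1 : 1 ≤ (c (p+1) * c q)⁻¹ := by
      rw [one_le_inv_iff₀]
      refine ⟨by positivity, ?_⟩
      calc c (p+1) * c q ≤ 1 * 1 :=
            mul_le_mul (hc1 (p+1) (by omega)).le (hc1 q (by omega)).le hcq.le zero_le_one
        _ = 1 := mul_one 1
    have step4 : ((c (p+1)*c q)⁻¹)^s₁ ≤ ((c (p+1)*c q)⁻¹)^(2:ℝ) :=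
      Real.rpow_le_rpow_of_exponent_le hinv1 hs₁2
    have step5 : ((c (p+1)*c q)⁻¹)^(2:ℝ) ≤ M * (R/r)^g := by
      have e1 : ((c (p+1)*c q)⁻¹)^(2:ℝ) =
          Real.exp ((-Real.log (c (p+1)) + -Real.log (c q)) * 2) := by
        rw [Real.rpow_def_of_pos (by positivity), Real.log_inv,
          Real.log_mul (ne_of_gt hcp1) (ne_of_gt hcq)]
        ring_nf
      have b1 : -Real.log (c (p+1)) ≤ 2*ε*(-Real.log (P p)) := by
        have h1 := hlogc (p+1) (by omega)
        rwa [show p+1-1 = p by omega] at h1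
      have b2 : -Real.log (c q) ≤ 2*ε*(-Real.log (P (q-1))) := hlogc q (by omega)
      have b3 : -Real.log (P p) ≤ Real.log ((B-A)/r) := le_trans hlogPp hlamR_r
      have b4 : -Real.log (P (q-1)) ≤ Real.log ((B-A)/r) := hlogPq1
      have b5 : (-Real.log (c (p+1)) + -Real.log (c q)) * 2 ≤ 8*ε*Real.log ((B-A)/r) := by
        have m1 : 2*ε*(-Real.log (P p)) ≤ 2*ε*Real.log ((B-A)/r) :=
          mul_le_mul_of_nonneg_left b3 (by linarith)
        have m2 : 2*ε*(-Real.log (P (q-1))) ≤ 2*ε*Real.log ((B-A)/r) :=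
          mul_le_mul_of_nonneg_left b4 (by linarith)
        linarith only [b1, b2, m1, m2]
      have hlogM0 : 0 ≤ Real.log M := Real.log_nonneg hM1
      have hlogrinv : 0 < -Real.log r := by
        have := Real.log_neg hr hr1
        linarith
      have hX' : Real.log ((B-A)/r) ≤ Real.log M + (-Real.log r) := by
        rw [Real.log_div (ne_of_gt hBA) (ne_of_gt hr)]
        have := Real.log_le_log hBA hBAM
        linarith
      have hδr : δ * (-Real.log r) ≤ Real.log (R/r) := by
        rw [Real.log_div (ne_of_gt hR0) (ne_of_gt hr)]
        linarith [hlogR]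
      have b7 : 8*ε*Real.log ((B-A)/r) ≤ Real.log M + g * Real.log (R/r) := by
        have t1 : 8*ε*Real.log ((B-A)/r) ≤ 8*ε*Real.log M + 8*ε*(-Real.log r) := by
          have h1 : 8*ε*Real.log ((B-A)/r) ≤ 8*ε*(Real.log M + (-Real.log r)) :=
            mul_le_mul_of_nonneg_left hX' (by linarith)
          linarith only [h1, show 8*ε*(Real.log M + (-Real.log r))
            = 8*ε*Real.log M + 8*ε*(-Real.log r) from by ring]
        have t2 : 8*ε*Real.log M ≤ 1 * Real.log M :=
          mul_le_mul_of_nonneg_right hε8 hlogM0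
        have t3 : 8*ε*(-Real.log r) ≤ δ * g * (-Real.log r) :=
          mul_le_mul_of_nonneg_right hεg hlogrinv.le
        have t5 : g * (δ * (-Real.log r)) ≤ g * Real.log (R/r) :=
          mul_le_mul_of_nonneg_left hδr hg0.le
        calc 8*ε*Real.log ((B-A)/r) ≤ 8*ε*Real.log M + 8*ε*(-Real.log r) := t1
          _ ≤ 1 * Real.log M + δ * g * (-Real.log r) := add_le_add t2 t3
          _ = Real.log M + g * (δ * (-Real.log r)) := by ring
          _ ≤ Real.log M + g * Real.log (R/r) := add_le_add_right t5 _
      calc ((c (p+1)*c q)⁻¹)^(2:ℝ)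
          = Real.exp ((-Real.log (c (p+1)) + -Real.log (c q)) * 2) := e1
        _ ≤ Real.exp (Real.log M + g * Real.log (R/r)) :=
            Real.exp_le_exp.mpr (le_trans b5 b7)
        _ = M * (R/r)^g := by
            rw [Real.exp_add, Real.exp_log hMpos, Real.rpow_def_of_pos (by positivity)]
            ring_nf
    -- the covering bound
    have h2R' : 2 * R ≤ (B - A) * ∏ i ∈ Finset.Icc 1 p, c i := by
      have h1 : 2 * R ≤ lam * R := mul_le_mul_of_nonneg_right hlam2 hR0.le
      exact le_trans h1 hLp
    have hcover_nat : coverNum E r R ≤ 3 * ∏ i ∈ Finset.Icc (p+1) q, n i :=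
      coverNum_le hn hAB ha0 hb0 hstep hdisj hEeq r R p q (by omega) hr hR0 hq1 h2R'
    have hcover : (coverNum E r R : ℝ) ≤ 3 * Y := by
      have h1 : ((3 * ∏ i ∈ Finset.Icc (p+1) q, n i : ℕ) : ℝ) = 3 * Y := by
        push_cast
        rfl
      calc (coverNum E r R : ℝ) ≤ ((3 * ∏ i ∈ Finset.Icc (p+1) q, n i : ℕ) : ℝ) := by
            exact_mod_cast hcover_nat
        _ = 3 * Y := h1
    have hRr : 0 < R / r := by positivity
    calc (coverNum E r R : ℝ) ≤ 3 * Y := hcover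
      _ ≤ 3 * ((P p / P q) ^ s₁) := by linarith [step1]
      _ ≤ 3 * (lam^s₁ * (R/r)^s₁ * ((c (p+1)*c q)⁻¹)^s₁) := by
          have := step2.trans_eq step3
          linarith
      _ ≤ 3 * (lam^2 * (R/r)^s₁ * (M * (R/r)^g)) := by
          have u1 : (0:ℝ) ≤ (R/r)^s₁ := Real.rpow_nonneg (by positivity) _
          have u2 : lam^s₁ * (R/r)^s₁ ≤ lam^2 * (R/r)^s₁ :=
            mul_le_mul_of_nonneg_right hlams u1
          have u3 : ((c (p+1)*c q)⁻¹)^s₁ ≤ M * (R/r)^g := le_trans step4 step5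
          have u4 : lam^s₁ * (R/r)^s₁ * ((c (p+1)*c q)⁻¹)^s₁ ≤
              lam^2 * (R/r)^s₁ * (M * (R/r)^g) :=
            mul_le_mul u2 u3 (Real.rpow_nonneg (by positivity) _)
              (mul_nonneg (pow_nonneg hlampos.le 2) u1)
          linarith only [u4]
      _ = (3 * lam^2 * M) * (R/r)^(s₁ + g) := by
          rw [Real.rpow_add hRr]
          ring
      _ = (3 * lam^2 * M) * (R/r)^s := by
          rw [show s₁ + g = s by rw [hgdef]; ring]
  constructor
  · -- hFun E δ ≤ Lstar
    refine le_of_forall_pos_le_add (fun ε hε => ?_)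
    have hmem : Lstar + ε ∈ {α : ℝ | 0 ≤ α ∧ ∃ b c : ℝ, 0 < b ∧ 0 < c ∧ ∀ r R : ℝ,
        0 < r → r < r ^ (1 - δ) → r ^ (1 - δ) ≤ R → R < b →
          (coverNum (↥E) r R : ℝ) ≤ c * (R / r) ^ (Lstar + ε)} := by
      refine ⟨by linarith, ?_⟩
      obtain ⟨b', C', hb', hC', h'⟩ := key (Lstar + ε) (by linarith)
      exact ⟨b', C', hb', hC', h'⟩
    exact csInf_le ⟨0, fun α hα => hα.1⟩ hmem
  · exact key
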